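/- Let Ω₊, Ω₋, Ω₀ be complex numbers and set φ = ((Ω₀/2)² - Ω₊Ω₋)^{1/2} with φ ≠ 0 and cosh(φ) - (Ω₀/(2φ))sinh(φ) ≠ 0. Define A₊ = (Ω₊/φ)sinh(φ)/(cosh(φ) - (Ω₀/(2φ))sinh(φ)), A₋ analogously with Ω₋, and A₀ = (cosh(φ) - (Ω₀/(2φ))sinh(φ))^{-2}. Then in the 2×2 matrix representation K₊ = [[0,1],[0,0]], K₋ = [[0,0],[-1,0]], K₀ = (1/2)[[1,0],[0,-1]], the matrix identity exp(Ω₊K₊ + Ω₀K₀ + Ω₋K₋) = exp(A₊K₊) · exp(ln(A₀)K₀) · exp(A₋K₋) holds. -/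

import Mathlib

open Matrix Complex

section ExpAux
variable {𝔸 : Type*} [NormedRing 𝔸] [NormedAlgebra ℂ 𝔸] [CompleteSpace 𝔸]

omit [CompleteSpace 𝔸] in
lemma exp_of_sq_zero (x : 𝔸) (h : x ^ 2 = 0) :
    NormedSpace.exp x = 1 + x := by
  rw [NormedSpace.exp_eq_tsum ℂ]
  show ∑' n : ℕ, ((n.factorial : ℂ))⁻¹ • x ^ n = 1 + x
  rw [tsum_eq_sum (s := Finset.range 2) (fun n hn => by
    have h2 : 2 ≤ n := by simp at hn; omega
    have : x ^ n = 0 := by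
      calc x ^ n = x ^ 2 * x ^ (n - 2) := by rw [← pow_add]; congr 1; omega
      _ = 0 := by rw [h, zero_mul]
    simp [this])]
  simp [Finset.sum_range_succ]

omit [CompleteSpace 𝔸] in
lemma exp_of_sq_eq_sq_smul_one (x : 𝔸) (φ : ℂ) (hφ : φ ≠ 0) (h : x ^ 2 = φ ^ 2 • 1) :
    NormedSpace.exp x = Complex.cosh φ • 1 + (Complex.sinh φ / φ) • x := by
  rw [NormedSpace.exp_eq_tsum ℂ]
  show ∑' n : ℕ, ((n.factorial : ℂ))⁻¹ • x ^ n = _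
  refine HasSum.tsum_eq ?_
  refine HasSum.even_add_odd ?_ ?_
  · have := (Complex.hasSum_cosh φ).smul_const (1 : 𝔸)
    convert this using 2 with n
    have hx : x ^ (2 * n) = φ ^ (2 * n) • 1 := by
      rw [pow_mul, h, smul_pow, one_pow, ← pow_mul]
    rw [hx, smul_smul, div_eq_inv_mul]
  · have := ((Complex.hasSum_sinh φ).div_const φ).smul_const x
    convert this using 2 with n
    have hx : x ^ (2 * n + 1) = φ ^ (2 * n) • x := by
      rw [pow_succ, pow_mul, h, smul_pow, one_pow, ← pow_mul, smul_mul_assoc, one_mul]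
    rw [hx, smul_smul]
    congr 1
    rw [pow_succ, mul_div_assoc, mul_div_assoc, div_div, mul_comm ((2 * n + 1).factorial : ℂ) φ,
      div_mul_cancel_left₀ hφ, mul_comm]
end ExpAux

theorem su11_normal_order_decomposition
    (Ωp Ωm Ω0 φ : ℂ)
    (hφ : φ ^ 2 = (Ω0 / 2) ^ 2 - Ωp * Ωm)
    (hφ0 : φ ≠ 0)
    (hd : Complex.cosh φ - (Ω0 / (2 * φ)) * Complex.sinh φ ≠ 0)
    (Kp Km K0 : Matrix (Fin 2) (Fin 2) ℂ)
    (hKp : Kp = !![0, 1; 0, 0])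
    (hKm : Km = !![0, 0; -1, 0])
    (hK0 : K0 = (1/2 : ℂ) • !![1, 0; 0, -1])
    (Ap Am A0h : ℂ)
    (hAp : Ap = (Ωp / φ) * Complex.sinh φ /
      (Complex.cosh φ - (Ω0 / (2 * φ)) * Complex.sinh φ))
    (hAm : Am = (Ωm / φ) * Complex.sinh φ /
      (Complex.cosh φ - (Ω0 / (2 * φ)) * Complex.sinh φ))
    (hA0h : A0h = (Complex.cosh φ - (Ω0 / (2 * φ)) * Complex.sinh φ)⁻¹) :
    NormedSpace.exp (Ωp • Kp + Ω0 • K0 + Ωm • Km) =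
      NormedSpace.exp (Ap • Kp) * !![A0h, 0; 0, A0h⁻¹] *
        NormedSpace.exp (Am • Km) := by
  letI : SeminormedRing (Matrix (Fin 2) (Fin 2) ℂ) := Matrix.linftyOpSemiNormedRing
  letI : NormedRing (Matrix (Fin 2) (Fin 2) ℂ) := Matrix.linftyOpNormedRing
  letI : NormedAlgebra ℂ (Matrix (Fin 2) (Fin 2) ℂ) := Matrix.linftyOpNormedAlgebra
  set c := Complex.cosh φ with hc
  set s := Complex.sinh φ with hs
  have hcs : c ^ 2 = s ^ 2 + 1 := Complex.cosh_sq φ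
  have hM : Ωp • Kp + Ω0 • K0 + Ωm • Km = !![Ω0/2, Ωp; -Ωm, -(Ω0/2)] := by
    subst hKp hKm hK0
    ext i j
    fin_cases i <;> fin_cases j <;> simp [Matrix.smul_apply] <;> ring
  have hM2 : (Ωp • Kp + Ω0 • K0 + Ωm • Km) ^ 2 = φ ^ 2 • (1 : Matrix (Fin 2) (Fin 2) ℂ) := by
    rw [hM, pow_two]
    ext i j
    fin_cases i <;> fin_cases j <;>
      simp [Matrix.mul_apply, Fin.sum_univ_two, Matrix.smul_apply, Matrix.one_apply, hφ] <;> ring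
  have hKp2 : (Ap • Kp) ^ 2 = 0 := by
    subst hKp; rw [pow_two]
    ext i j
    fin_cases i <;> fin_cases j <;>
      simp [Matrix.mul_apply, Fin.sum_univ_two, Matrix.smul_apply]
  have hKm2 : (Am • Km) ^ 2 = 0 := by
    subst hKm; rw [pow_two]
    ext i j
    fin_cases i <;> fin_cases j <;>
      simp [Matrix.mul_apply, Fin.sum_univ_two, Matrix.smul_apply]
  erw [exp_of_sq_eq_sq_smul_one _ φ hφ0 hM2, exp_of_sq_zero _ hKp2, exp_of_sq_zero _ hKm2]
  rw [hM]
  have h1 : (1 : Matrix (Fin 2) (Fin 2) ℂ) + Ap • Kp = !![1, Ap; 0, 1] := by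
    subst hKp; ext i j
    fin_cases i <;> fin_cases j <;> simp [Matrix.smul_apply, Matrix.one_apply]
  have h2 : (1 : Matrix (Fin 2) (Fin 2) ℂ) + Am • Km = !![1, 0; -Am, 1] := by
    subst hKm; ext i j
    fin_cases i <;> fin_cases j <;> simp [Matrix.smul_apply, Matrix.one_apply]
  have hL : c • (1 : Matrix (Fin 2) (Fin 2) ℂ) + (s / φ) • !![Ω0/2, Ωp; -Ωm, -(Ω0/2)] =
      !![c + s / φ * (Ω0/2), s / φ * Ωp; -(s / φ * Ωm), c - s / φ * (Ω0/2)] := by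
    ext i j
    fin_cases i <;> fin_cases j <;> simp [Matrix.smul_apply, Matrix.one_apply] <;> ring
  rw [hL, h1, h2, Matrix.mul_fin_two, Matrix.mul_fin_two]
  -- scalar preliminaries
  set D := c - (Ω0 / (2 * φ)) * s with hDdef
  have hd2 : 2*φ*c - Ω0*s ≠ 0 := by
    intro h; apply hd; rw [hDdef]; field_simp; linear_combination h
  have hDeq : D = (2*φ*c - Ω0*s)/(2*φ) := by rw [hDdef]; field_simp
  have hDinv : A0h⁻¹ = D := by rw [hA0h, inv_inv]
  have hApD : Ap * A0h⁻¹ = Ωp * s / φ := by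
    rw [hDinv, hAp]; show (Ωp / φ) * s / D * D = _
    rw [div_mul_cancel₀ _ hd]; ring
  ext i j
  fin_cases i <;> fin_cases j <;>
    simp only [Fin.zero_eta, Fin.mk_one, Matrix.cons_val', Matrix.cons_val_zero,
      Matrix.cons_val_one, Matrix.head_cons, Matrix.head_fin_const, Matrix.empty_val',
      Matrix.cons_val_fin_one, Matrix.of_apply] <;>
    simp only [one_mul, mul_one, zero_mul, mul_zero, add_zero, zero_add]
  · rw [hApD]
    simp only [hA0h, hAm, hDeq]
    field_simp
    rw [eq_div_iff (by intro h; apply hd2; linear_combination h)]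
    linear_combination (4*φ^2)*hcs + (4*s^2)*hφ
  · rw [hApD]; ring
  · rw [hDinv, hAm]
    field_simp
  · rw [hDinv, hDdef]; ring
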